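/- Fix k ≥ 1 and n ≥ 2, and consider the Algorithm 3 transition system. Define Total(c) = ∑_{i} (secret of agent i, taken as 0 if none) + ∑_{i with label S'} (mask of agent i, taken as 0 if none), computed in ZMod k. Then Total(c') = Total(c) for every single step c → c' of types (R1), (R2), (R3), or (R4). -/
import Mathlib


/-- Labels of Algorithm 3. -/
inductive Alg3.Label : Type
  | S | S' | R | u | ubar
deriving DecidableEq

/-- Agent state of Algorithm 3: a secret, a mask, and a label. -/
structure Alg3.AgentState (k : ℕ) : Type where
  secret : Option (ZMod k)
  mask : Option (ZMod k)
  label : Alg3.Label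

/-- A configuration: the state of each of the `n` agents. -/
abbrev Alg3.Config (k n : ℕ) : Type := Fin n → Alg3.AgentState k

open Alg3 in
/-- A single step of Algorithm 3 between a distinct initiator `i` and responder `j`. -/
inductive Alg3.Step (k n : ℕ) : Config k n → Config k n → Prop
  | r1 (c : Config k n) (i j : Fin n) (hij : i ≠ j) (σ : Option (ZMod k)) (r r' : ZMod k)
      (hi : c i = ⟨σ, some r, Label.S⟩) (hj : (c j).label = Label.ubar) :
      Step k n c (Function.update c i ⟨σ, some r', Label.S⟩)
  | r2 (c : Config k n) (i j : Fin n) (hij : i ≠ j) (μ r v : ZMod k) (ρj : Option (ZMod k))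
      (hi : c i = ⟨some μ, some r, Label.S⟩) (hj : c j = ⟨some v, ρj, Label.u⟩) :
      Step k n c (Function.update (Function.update c i ⟨none, some (μ - r), Label.S'⟩)
        j ⟨some (v + r), ρj, Label.R⟩)
  | r3 (c : Config k n) (i j : Fin n) (hij : i ≠ j) (x y : ZMod k) (ρj : Option (ZMod k))
      (hi : c i = ⟨none, some x, Label.S'⟩) (hj : c j = ⟨some y, ρj, Label.R⟩) :
      Step k n c (Function.update (Function.update c i ⟨none, none, Label.ubar⟩)
        j ⟨some (x + y), ρj, Label.S⟩)
  | r4 (c : Config k n) (i j : Fin n) (hij : i ≠ j) (hi : (c i).label = Label.ubar) :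
      Step k n c (Function.update c i ⟨(c i).secret, (c i).mask, Label.u⟩)

/-- Reachability: the reflexive–transitive closure of single steps. -/
def Alg3.Reachable (k n : ℕ) : Alg3.Config k n → Alg3.Config k n → Prop :=
  Relation.ReflTransGen (Alg3.Step k n)


open Alg3 in
/-- Contribution of a single agent state to the aggregate. -/
def Alg3.g (k : ℕ) (s : AgentState k) : ZMod k :=
  s.secret.getD 0 + if s.label = Label.S' then s.mask.getD 0 else 0

open Alg3 in
lemma Alg3.total_eq {k n : ℕ} (c : Config k n) :
    (∑ i : Fin n, (c i).secret.getD 0) +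
      (∑ i ∈ Finset.univ.filter (fun i => (c i).label = Label.S'), (c i).mask.getD 0) =
    ∑ i, g k (c i) := by
  rw [Finset.sum_filter, ← Finset.sum_add_distrib]; rfl

open Alg3 in
lemma Alg3.sum_update {k n : ℕ} (c : Config k n) (i : Fin n) (a : AgentState k) :
    ∑ x, g k (Function.update c i a x) = ∑ x, g k (c x) + g k a - g k (c i) := by
  have h : (fun x => g k (Function.update c i a x))
      = Function.update (fun x => g k (c x)) i (g k a) := by
    funext x
    by_cases hx : x = i <;> simp [Function.update, hx]
  rw [h, Finset.sum_update_of_mem (Finset.mem_univ i)]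
  rw [← Finset.sum_erase_add _ _ (Finset.mem_univ i)]
  simp [Finset.sdiff_singleton_eq_erase]
  ring

open Alg3 in
/-- The aggregate `Total(c) = ∑ secrets + ∑_{label S'} masks` (missing values count
as `0`, arithmetic in `ZMod k`) is preserved by every single step of Algorithm 3. -/
theorem stmt7 (k n : ℕ) (hk : 1 ≤ k) (hn : 2 ≤ n)
    (Total : Config k n → ZMod k)
    (hTotal : ∀ c : Config k n, Total c =
      (∑ i : Fin n, (c i).secret.getD 0) +
      (∑ i ∈ Finset.univ.filter (fun i => (c i).label = Label.S'), (c i).mask.getD 0))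
    (c c' : Config k n) (hstep : Step k n c c') :
    Total c' = Total c := by
  rw [hTotal, hTotal, total_eq, total_eq]
  cases hstep with
  | r1 i j hij σ r r' hi hj =>
      rw [sum_update, hi]
      simp [g]
  | r2 i j hij μ r v ρj hi hj =>
      rw [sum_update, sum_update, Function.update_of_ne hij.symm, hi, hj]
      simp [g]
      ring
  | r3 i j hij x y ρj hi hj =>
      rw [sum_update, sum_update, Function.update_of_ne hij.symm, hi, hj]
      simp [g]
      ring
  | r4 i j hij hi =>
      rw [sum_update]
      simp [g, hi]
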